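/- The action of GL(2, ℂ) on the Riemann sphere ℂP¹ by Möbius transformations is weak mixing but not thick strong mixing: for all nonempty open sets U₁, U₂, V₁, V₂ ⊆ ℂP¹ there exists γ ∈ GL(2, ℂ) with γU₁ ∩ V₁ ≠ ∅ and γU₂ ∩ V₂ ≠ ∅; but there is no thick set N ⊆ GL(2, ℂ) such that for every pair of nonempty open sets U, V ⊆ ℂP¹ there is a compact set F ⊆ N with γU ∩ V ≠ ∅ for all γ ∈ N \ F. -/

import Mathlib

open Pointwise

/-- A subset `N` of a group `G` is thick if for every finite subset `F ⊆ G`,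
`N ∩ ⋂_{γ ∈ F} γN ≠ ∅`. -/
def IsThick {G : Type*} [Group G] (N : Set G) : Prop :=
  ∀ F : Finset G, (N ∩ ⋂ γ ∈ F, γ • N).Nonempty

/-- The Riemann sphere `ℂP¹`, the projectivization of `ℂ²`. -/
abbrev CP1 : Type := Projectivization ℂ (Fin 2 → ℂ)

/-- The quotient topology on `ℂP¹` (quotient of the nonzero vectors of `ℂ²`). -/
noncomputable instance : TopologicalSpace CP1 := instTopologicalSpaceQuotient

/-- The complex absolute value, as an absolute value (removed from Mathlib). -/
noncomputable def Complex.abs : AbsoluteValue ℂ ℝ where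
  toFun := fun z => ‖z‖
  map_mul' := norm_mul
  nonneg' := norm_nonneg
  eq_zero' := fun _ => norm_eq_zero
  add_le' := norm_add_le

lemma Complex.abs_apply' (z : ℂ) : Complex.abs z = ‖z‖ := rfl

lemma Complex.continuous_abs : Continuous Complex.abs := continuous_norm

@[simp] lemma Complex.abs_ofReal (r : ℝ) : Complex.abs (r : ℂ) = |r| := by
  rw [Complex.abs_apply', Complex.norm_real, Real.norm_eq_abs]

@[simp] lemma Complex.abs_two : Complex.abs 2 = 2 := by
  rw [Complex.abs_apply']; norm_num

/-- `glHits γ U V` says that `γU ∩ V ≠ ∅` for the Möbius action of `γ ∈ GL(2, ℂ)` on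
`ℂP¹` given by `γ · [v] = [γv]`: it holds iff there are nonzero `v, w ∈ ℂ²` with
`w = γv`, `[v] ∈ U` and `[w] ∈ V`. -/
def glHits (γ : Matrix.GeneralLinearGroup (Fin 2) ℂ) (U V : Set CP1) : Prop :=
  ∃ (v w : Fin 2 → ℂ) (hv : v ≠ 0) (hw : w ≠ 0),
    w = (γ : Matrix (Fin 2) (Fin 2) ℂ).mulVec v ∧
    Projectivization.mk ℂ v hv ∈ U ∧ Projectivization.mk ℂ w hw ∈ V

/-! ### Auxiliary machinery -/

set_option maxHeartbeats 1000000

section Aux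

/-- The `2×2` determinant pairing of two vectors in `ℂ²`. -/
noncomputable def dp (v w : Fin 2 → ℂ) : ℂ := v 0 * w 1 - v 1 * w 0

lemma dp_mulVec (γ : Matrix (Fin 2) (Fin 2) ℂ) (v w : Fin 2 → ℂ) :
    dp (γ.mulVec v) (γ.mulVec w) = γ.det * dp v w := by
  simp [dp, Matrix.mulVec, dotProduct, Fin.sum_univ_two, Matrix.det_fin_two]
  ring

private lemma tri3 (u v w : ℂ) :
    Complex.abs (u - v + w) ≤ Complex.abs u + Complex.abs v + Complex.abs w := by
  calc Complex.abs (u - v + w) ≤ Complex.abs (u - v) + Complex.abs w := Complex.abs.add_le _ _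
    _ ≤ Complex.abs u + Complex.abs v + Complex.abs w := by
        have := Complex.abs.sub_le_add u v; linarith

/-- U-side cross-ratio estimate. -/
lemma cross_U {x1 x2 x3 x4 : Fin 2 → ℂ}
    (h1 : Complex.abs (x1 1) < (1/100) * Complex.abs (x1 0))
    (h2 : Complex.abs (x2 0) < (1/100) * Complex.abs (x2 1))
    (h3 : Complex.abs (x3 1 - x3 0) < (1/100) * Complex.abs (x3 0))
    (h4 : Complex.abs (2 * x4 1 - x4 0) < (1/100) * Complex.abs (x4 0)) :
    Complex.abs (dp x1 x4) * Complex.abs (dp x2 x3) <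
      Complex.abs (dp x1 x3) * Complex.abs (dp x2 x4) := by
  set a1 := Complex.abs (x1 0) with ha1d
  set bb1 := Complex.abs (x1 1)
  set a2 := Complex.abs (x2 0)
  set b2 := Complex.abs (x2 1)
  set a3 := Complex.abs (x3 0)
  set b3 := Complex.abs (x3 1)
  set a4 := Complex.abs (x4 0)
  set b4 := Complex.abs (x4 1)
  set d3 := Complex.abs (x3 1 - x3 0)
  set d4 := Complex.abs (2 * x4 1 - x4 0)
  set n13 := Complex.abs (dp x1 x3)
  set n24 := Complex.abs (dp x2 x4)
  set n14 := Complex.abs (dp x1 x4)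
  set n23 := Complex.abs (dp x2 x3)
  have nn : ∀ z : ℂ, 0 ≤ Complex.abs z := fun z => Complex.abs.nonneg z
  have ha1 : 0 < a1 := by have := nn (x1 1); linarith
  have hb2 : 0 < b2 := by have := nn (x2 0); linarith
  have ha3 : 0 < a3 := by have := nn (x3 1 - x3 0); linarith
  have ha4 : 0 < a4 := by have := nn (2 * x4 1 - x4 0); linarith
  have hb3 : b3 ≤ a3 + d3 := by
    have : x3 1 = x3 0 + (x3 1 - x3 0) := by ring
    calc b3 = Complex.abs (x3 0 + (x3 1 - x3 0)) := by rw [← this]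
      _ ≤ a3 + d3 := Complex.abs.add_le _ _
  have hb4 : 2 * b4 ≤ a4 + d4 := by
    have h : (2 : ℂ) * x4 1 = x4 0 + (2 * x4 1 - x4 0) := by ring
    have : Complex.abs (2 * x4 1) = 2 * b4 := by
      rw [map_mul]; norm_num; rfl
    rw [← this, h]
    exact Complex.abs.add_le _ _
  have t13 : a1 * a3 ≤ n13 + a1 * d3 + bb1 * a3 := by
    have h : x1 0 * x3 0 = dp x1 x3 - x1 0 * (x3 1 - x3 0) + x1 1 * x3 0 := by
      simp only [dp]; ring
    calc a1 * a3 = Complex.abs (x1 0 * x3 0) := (map_mul _ _ _).symm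
      _ = Complex.abs (dp x1 x3 - x1 0 * (x3 1 - x3 0) + x1 1 * x3 0) := by rw [← h]
      _ ≤ n13 + Complex.abs (x1 0 * (x3 1 - x3 0)) + Complex.abs (x1 1 * x3 0) := tri3 _ _ _
      _ = n13 + a1 * d3 + bb1 * a3 := by rw [map_mul, map_mul]
  have t24 : b2 * a4 ≤ a2 * b4 + n24 := by
    have h : x2 1 * x4 0 = x2 0 * x4 1 - dp x2 x4 := by simp only [dp]; ring
    calc b2 * a4 = Complex.abs (x2 1 * x4 0) := (map_mul _ _ _).symm
      _ = Complex.abs (x2 0 * x4 1 - dp x2 x4) := by rw [← h]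
      _ ≤ Complex.abs (x2 0 * x4 1) + n24 := Complex.abs.sub_le_add _ _
      _ = a2 * b4 + n24 := by rw [map_mul]
  have t14 : n14 ≤ a1 * b4 + bb1 * a4 := by
    calc n14 ≤ Complex.abs (x1 0 * x4 1) + Complex.abs (x1 1 * x4 0) :=
        Complex.abs.sub_le_add _ _
      _ = a1 * b4 + bb1 * a4 := by rw [map_mul, map_mul]
  have t23 : n23 ≤ a2 * b3 + b2 * a3 := by
    calc n23 ≤ Complex.abs (x2 0 * x3 1) + Complex.abs (x2 1 * x3 0) :=
        Complex.abs.sub_le_add _ _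
      _ = a2 * b3 + b2 * a3 := by rw [map_mul, map_mul]
  have hn13 : (98/100) * (a1 * a3) < n13 := by
    nlinarith [mul_lt_mul_of_pos_left h3 ha1, mul_lt_mul_of_pos_right h1 ha3]
  have hb4' : b4 < (101/200) * a4 := by linarith
  have hb4'' : b4 ≤ a4 := by linarith
  have hn24 : (99/100) * (b2 * a4) < n24 := by
    have k1 : a2 * b4 ≤ a2 * a4 := mul_le_mul_of_nonneg_left hb4'' (nn (x2 0))
    have k2 : a2 * a4 < (1/100 * b2) * a4 := mul_lt_mul_of_pos_right h2 ha4
    nlinarith [t24, k1, k2]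
  have hn14 : n14 < (52/100) * (a1 * a4) := by
    nlinarith [mul_lt_mul_of_pos_left hb4' ha1, mul_lt_mul_of_pos_right h1 ha4]
  have hn23 : n23 < (102/100) * (b2 * a3) := by
    have hb3' : b3 ≤ (101/100) * a3 := by linarith
    have k1 : a2 * b3 ≤ a2 * ((101/100) * a3) := mul_le_mul_of_nonneg_left hb3' (nn (x2 0))
    have k2 : a2 * ((101/100) * a3) < (1/100 * b2) * ((101/100) * a3) :=
      mul_lt_mul_of_pos_right h2 (by positivity)
    nlinarith [t23, k1, k2]
  have hfin1 : n14 * n23 < ((52/100) * (a1 * a4)) * ((102/100) * (b2 * a3)) :=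
    mul_lt_mul'' hn14 hn23 (nn _) (nn _)
  have hfin2 : ((98/100) * (a1 * a3)) * ((99/100) * (b2 * a4)) ≤ n13 * n24 :=
    mul_le_mul hn13.le hn24.le (by positivity) (nn _)
  have hX : 0 < a1 * a3 * b2 * a4 := by positivity
  nlinarith [hfin1, hfin2, hX]

/-- V-side cross-ratio estimate. -/
lemma cross_V {x1 x2 x3 x4 : Fin 2 → ℂ}
    (h1 : Complex.abs (x1 1) < (1/100) * Complex.abs (x1 0))
    (h2 : Complex.abs (x2 0) < (1/100) * Complex.abs (x2 1))
    (h3 : Complex.abs (x3 1 - x3 0) < (1/100) * Complex.abs (x3 0))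
    (h4 : Complex.abs (x4 1 - 2 * x4 0) < (1/100) * Complex.abs (x4 0)) :
    Complex.abs (dp x1 x3) * Complex.abs (dp x2 x4) <
      Complex.abs (dp x1 x4) * Complex.abs (dp x2 x3) := by
  set a1 := Complex.abs (x1 0)
  set bb1 := Complex.abs (x1 1)
  set a2 := Complex.abs (x2 0)
  set b2 := Complex.abs (x2 1)
  set a3 := Complex.abs (x3 0)
  set b3 := Complex.abs (x3 1)
  set a4 := Complex.abs (x4 0)
  set b4 := Complex.abs (x4 1)
  set d3 := Complex.abs (x3 1 - x3 0)
  set d4 := Complex.abs (x4 1 - 2 * x4 0)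
  set n13 := Complex.abs (dp x1 x3)
  set n24 := Complex.abs (dp x2 x4)
  set n14 := Complex.abs (dp x1 x4)
  set n23 := Complex.abs (dp x2 x3)
  have nn : ∀ z : ℂ, 0 ≤ Complex.abs z := fun z => Complex.abs.nonneg z
  have ha1 : 0 < a1 := by have := nn (x1 1); linarith
  have hb2 : 0 < b2 := by have := nn (x2 0); linarith
  have ha3 : 0 < a3 := by have := nn (x3 1 - x3 0); linarith
  have ha4 : 0 < a4 := by have := nn (x4 1 - 2 * x4 0); linarith
  have hb3 : b3 ≤ a3 + d3 := by
    have h : x3 1 = x3 0 + (x3 1 - x3 0) := by ring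
    calc b3 = Complex.abs (x3 0 + (x3 1 - x3 0)) := by rw [← h]
      _ ≤ a3 + d3 := Complex.abs.add_le _ _
  have hb4 : b4 ≤ 2 * a4 + d4 := by
    have h : x4 1 = 2 * x4 0 + (x4 1 - 2 * x4 0) := by ring
    have e : Complex.abs (2 * x4 0) = 2 * a4 := by rw [map_mul]; norm_num; rfl
    calc b4 = Complex.abs (2 * x4 0 + (x4 1 - 2 * x4 0)) := by rw [← h]
      _ ≤ Complex.abs (2 * x4 0) + d4 := Complex.abs.add_le _ _
      _ = 2 * a4 + d4 := by rw [e]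
  have t13 : n13 ≤ a1 * b3 + bb1 * a3 := by
    calc n13 ≤ Complex.abs (x1 0 * x3 1) + Complex.abs (x1 1 * x3 0) :=
        Complex.abs.sub_le_add _ _
      _ = a1 * b3 + bb1 * a3 := by rw [map_mul, map_mul]
  have t24 : n24 ≤ a2 * b4 + b2 * a4 := by
    calc n24 ≤ Complex.abs (x2 0 * x4 1) + Complex.abs (x2 1 * x4 0) :=
        Complex.abs.sub_le_add _ _
      _ = a2 * b4 + b2 * a4 := by rw [map_mul, map_mul]
  have t14 : 2 * (a1 * a4) ≤ n14 + a1 * d4 + bb1 * a4 := by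
    have h : 2 * (x1 0 * x4 0) = dp x1 x4 - x1 0 * (x4 1 - 2 * x4 0) + x1 1 * x4 0 := by
      simp only [dp]; ring
    have e : Complex.abs (2 * (x1 0 * x4 0)) = 2 * (a1 * a4) := by
      rw [map_mul, map_mul]; norm_num; rfl
    calc 2 * (a1 * a4) = Complex.abs (2 * (x1 0 * x4 0)) := e.symm
      _ = Complex.abs (dp x1 x4 - x1 0 * (x4 1 - 2 * x4 0) + x1 1 * x4 0) := by rw [h]
      _ ≤ n14 + Complex.abs (x1 0 * (x4 1 - 2 * x4 0)) + Complex.abs (x1 1 * x4 0) := tri3 _ _ _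
      _ = n14 + a1 * d4 + bb1 * a4 := by rw [map_mul, map_mul]
  have t23 : b2 * a3 ≤ a2 * b3 + n23 := by
    have h : x2 1 * x3 0 = x2 0 * x3 1 - dp x2 x3 := by simp only [dp]; ring
    calc b2 * a3 = Complex.abs (x2 1 * x3 0) := (map_mul _ _ _).symm
      _ = Complex.abs (x2 0 * x3 1 - dp x2 x3) := by rw [← h]
      _ ≤ Complex.abs (x2 0 * x3 1) + n23 := Complex.abs.sub_le_add _ _
      _ = a2 * b3 + n23 := by rw [map_mul]
  have hb3' : b3 ≤ (101/100) * a3 := by linarith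
  have hn13 : n13 < (102/100) * (a1 * a3) := by
    have k1 : a1 * b3 ≤ a1 * ((101/100) * a3) := mul_le_mul_of_nonneg_left hb3' (nn (x1 0))
    have k2 : bb1 * a3 < (1/100 * a1) * a3 := mul_lt_mul_of_pos_right h1 ha3
    nlinarith [t13, k1, k2]
  have hb4' : b4 ≤ (201/100) * a4 := by linarith
  have hn24 : n24 < (103/100) * (b2 * a4) := by
    have k1 : a2 * b4 ≤ a2 * ((201/100) * a4) := mul_le_mul_of_nonneg_left hb4' (nn (x2 0))
    have k2 : a2 * ((201/100) * a4) < (1/100 * b2) * ((201/100) * a4) :=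
      mul_lt_mul_of_pos_right h2 (by positivity)
    nlinarith [t24, k1, k2]
  have hn14 : (198/100) * (a1 * a4) < n14 := by
    have k1 : a1 * d4 < a1 * ((1/100) * a4) := mul_lt_mul_of_pos_left h4 ha1
    have k2 : bb1 * a4 < (1/100 * a1) * a4 := mul_lt_mul_of_pos_right h1 ha4
    nlinarith [t14, k1, k2]
  have hn23 : (98/100) * (b2 * a3) < n23 := by
    have k1 : a2 * b3 ≤ a2 * ((101/100) * a3) := mul_le_mul_of_nonneg_left hb3' (nn (x2 0))
    have k2 : a2 * ((101/100) * a3) < (1/100 * b2) * ((101/100) * a3) :=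
      mul_lt_mul_of_pos_right h2 (by positivity)
    nlinarith [t23, k1, k2]
  have hfin1 : n13 * n24 < ((102/100) * (a1 * a3)) * ((103/100) * (b2 * a4)) :=
    mul_lt_mul'' hn13 hn24 (nn _) (nn _)
  have hfin2 : ((198/100) * (a1 * a4)) * ((98/100) * (b2 * a3)) ≤ n14 * n23 :=
    mul_le_mul hn14.le hn23.le (by positivity) (nn _)
  have hX : 0 < a1 * a3 * b2 * a4 := by positivity
  nlinarith [hfin1, hfin2, hX]

/-! ### The test open sets -/

/-- A basic open set of `ℂP¹` defined by the homogeneous condition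
`|p v₀ + q v₁| < ε |r v₀ + s v₁|`. -/
noncomputable def projSet (p q r s : ℂ) (ε : ℝ) : Set CP1 :=
  {x | ∃ (v : Fin 2 → ℂ) (hv : v ≠ 0), Projectivization.mk ℂ v hv = x ∧
        Complex.abs (p * v 0 + q * v 1) < ε * Complex.abs (r * v 0 + s * v 1)}

lemma mem_projSet_mk {p q r s : ℂ} {ε : ℝ} {v : Fin 2 → ℂ} (hv : v ≠ 0) :
    Projectivization.mk ℂ v hv ∈ projSet p q r s ε ↔
      Complex.abs (p * v 0 + q * v 1) < ε * Complex.abs (r * v 0 + s * v 1) := by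
  constructor
  · rintro ⟨w, hw, hmk, hcond⟩
    obtain ⟨a, ha⟩ := (Projectivization.mk_eq_mk_iff ℂ w v hw hv).1 hmk
    rw [← ha] at hcond
    have e1 : p * (a • v) 0 + q * (a • v) 1 = (a:ℂ) * (p * v 0 + q * v 1) := by
      simp [Units.smul_def, Pi.smul_apply, smul_eq_mul]; ring
    have e2 : r * (a • v) 0 + s * (a • v) 1 = (a:ℂ) * (r * v 0 + s * v 1) := by
      simp [Units.smul_def, Pi.smul_apply, smul_eq_mul]; ring
    rw [e1, e2, map_mul, map_mul] at hcond
    have hapos : 0 < Complex.abs (a:ℂ) := by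
      simpa using (AbsoluteValue.pos Complex.abs (a.ne_zero))
    rw [show (ε : ℝ) * (Complex.abs (a:ℂ) * Complex.abs (r * v 0 + s * v 1))
        = Complex.abs (a:ℂ) * (ε * Complex.abs (r * v 0 + s * v 1)) from by ring] at hcond
    exact lt_of_mul_lt_mul_left hcond hapos.le
  · intro h; exact ⟨v, hv, rfl, h⟩

lemma isOpen_projSet (p q r s : ℂ) (ε : ℝ) : IsOpen (projSet p q r s ε) := by
  have hq : Topology.IsQuotientMap (Projectivization.mk' ℂ :
      { v : Fin 2 → ℂ // v ≠ 0 } → CP1) := isQuotientMap_quotient_mk'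
  rw [← hq.isOpen_preimage]
  have : (Projectivization.mk' ℂ) ⁻¹' (projSet p q r s ε) =
      Subtype.val ⁻¹' {v : Fin 2 → ℂ |
        Complex.abs (p * v 0 + q * v 1) < ε * Complex.abs (r * v 0 + s * v 1)} := by
    ext ⟨v, hv⟩
    simpa using mem_projSet_mk (p := p) (q := q) (r := r) (s := s) (ε := ε) hv
  rw [this]
  apply IsOpen.preimage continuous_subtype_val
  apply isOpen_lt
  · exact Complex.continuous_abs.comp
      (((continuous_const.mul (continuous_apply 0))).add
        ((continuous_const.mul (continuous_apply 1))))
  · exact continuous_const.mul (Complex.continuous_abs.comp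
      (((continuous_const.mul (continuous_apply 0))).add
        ((continuous_const.mul (continuous_apply 1)))))

/-! ### Charts and the two-points lemma -/

lemma vec_ne_zero0 (t : ℂ) : ![(1:ℂ), t] ≠ 0 := by
  intro h
  have := congrFun h 0
  simp at this

lemma vec_ne_zero1 (t : ℂ) : ![t, (1:ℂ)] ≠ 0 := by
  intro h
  have := congrFun h 1
  simp at this

noncomputable def chart0 (t : ℂ) : CP1 := Projectivization.mk ℂ ![1, t] (vec_ne_zero0 t)
noncomputable def chart1 (t : ℂ) : CP1 := Projectivization.mk ℂ ![t, 1] (vec_ne_zero1 t)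

lemma continuous_chart0 : Continuous chart0 := by
  have h : chart0 = (Projectivization.mk' ℂ) ∘ (fun t => ⟨![1, t], vec_ne_zero0 t⟩) := rfl
  rw [h]
  refine Continuous.comp ?_ ?_
  · exact continuous_coinduced_rng
  · refine Continuous.subtype_mk ?_ _
    refine continuous_pi fun i => ?_
    fin_cases i
    · simpa using continuous_const
    · simpa using continuous_id'

lemma continuous_chart1 : Continuous chart1 := by
  have h : chart1 = (Projectivization.mk' ℂ) ∘ (fun t => ⟨![t, 1], vec_ne_zero1 t⟩) := rfl
  rw [h]
  refine Continuous.comp ?_ ?_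
  · exact continuous_coinduced_rng
  · refine Continuous.subtype_mk ?_ _
    refine continuous_pi fun i => ?_
    fin_cases i
    · simpa using continuous_id'
    · simpa using continuous_const

lemma chart0_inj : Function.Injective chart0 := by
  intro s t h
  rw [chart0, chart0, Projectivization.mk_eq_mk_iff'] at h
  obtain ⟨a, ha⟩ := h
  have h0 := congrFun ha 0
  have h1 := congrFun ha 1
  simp [Pi.smul_apply] at h0 h1
  rw [h0] at h1; simpa using h1.symm

lemma chart1_inj : Function.Injective chart1 := by
  intro s t h
  rw [chart1, chart1, Projectivization.mk_eq_mk_iff'] at h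
  obtain ⟨a, ha⟩ := h
  have h0 := congrFun ha 0
  have h1 := congrFun ha 1
  simp [Pi.smul_apply] at h0 h1
  rw [h1] at h0; simpa using h0.symm

lemma chart_surj (x : CP1) : (∃ t, chart0 t = x) ∨ (∃ t, chart1 t = x) := by
  induction x using Projectivization.ind with
  | h v hv =>
    by_cases h0 : v 0 = 0
    · right
      have h1 : v 1 ≠ 0 := by
        intro h1
        apply hv
        funext i; fin_cases i <;> simp [h0, h1]
      refine ⟨v 0 / v 1, ?_⟩
      rw [chart1, Projectivization.mk_eq_mk_iff']
      refine ⟨(v 1)⁻¹, ?_⟩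
      funext i; fin_cases i <;> simp [Pi.smul_apply, h0] <;> field_simp
    · left
      refine ⟨v 1 / v 0, ?_⟩
      rw [chart0, Projectivization.mk_eq_mk_iff']
      refine ⟨(v 0)⁻¹, ?_⟩
      funext i; fin_cases i <;> simp [Pi.smul_apply, h0] <;> field_simp

lemma exists_two_complex {O : Set ℂ} (hO : IsOpen O) {t : ℂ} (ht : t ∈ O) :
    ∃ s ∈ O, s ≠ t := by
  have hmem : O ∩ {t}ᶜ ∈ nhdsWithin t {t}ᶜ :=
    Filter.inter_mem (mem_nhdsWithin_of_mem_nhds (hO.mem_nhds ht)) self_mem_nhdsWithin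
  obtain ⟨s, hs1, hs2⟩ := Filter.nonempty_of_mem hmem
  exact ⟨s, hs1, hs2⟩

lemma exists_mem_ne {U : Set CP1} (hU : IsOpen U) (hne : U.Nonempty) (p : CP1) :
    ∃ u ∈ U, u ≠ p := by
  obtain ⟨u₀, hu₀⟩ := hne
  rcases chart_surj u₀ with ⟨t, ht⟩ | ⟨t, ht⟩
  · have hO : IsOpen (chart0 ⁻¹' U) := hU.preimage continuous_chart0
    have ht' : t ∈ chart0 ⁻¹' U := by simp [ht, hu₀]
    obtain ⟨s, hs, hst⟩ := exists_two_complex hO ht'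
    by_cases h : chart0 s = p
    · exact ⟨chart0 t, by simpa [ht] using hu₀, by
        intro hc; exact hst (chart0_inj (h ▸ hc)).symm⟩
    · exact ⟨chart0 s, hs, h⟩
  · have hO : IsOpen (chart1 ⁻¹' U) := hU.preimage continuous_chart1
    have ht' : t ∈ chart1 ⁻¹' U := by simp [ht, hu₀]
    obtain ⟨s, hs, hst⟩ := exists_two_complex hO ht'
    by_cases h : chart1 s = p
    · exact ⟨chart1 t, by simpa [ht] using hu₀, by
        intro hc; exact hst (chart1_inj (h ▸ hc)).symm⟩
    · exact ⟨chart1 s, hs, h⟩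

/-! ### Two-transitivity -/

lemma mk_eq_of_dp_zero {a b : Fin 2 → ℂ} (ha : a ≠ 0) (hb : b ≠ 0) (h : dp a b = 0) :
    Projectivization.mk ℂ a ha = Projectivization.mk ℂ b hb := by
  rw [Projectivization.mk_eq_mk_iff']
  rw [dp, sub_eq_zero] at h
  by_cases hb0 : b 0 = 0
  · have hb1 : b 1 ≠ 0 := by
      intro h1; exact hb (by funext i; fin_cases i <;> simp [hb0, h1])
    have ha0 : a 0 = 0 := by
      have := h
      rw [hb0, mul_zero] at this
      rcases mul_eq_zero.1 this with h' | h'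
      · exact h'
      · exact absurd h' hb1
    refine ⟨a 1 / b 1, ?_⟩
    funext i; fin_cases i <;> simp [Pi.smul_apply, ha0, hb0] <;> field_simp
  · refine ⟨a 0 / b 0, ?_⟩
    funext i; fin_cases i <;> simp [Pi.smul_apply]
    · field_simp
    · field_simp
      linear_combination h

lemma dp_rep_ne_zero {x y : CP1} (h : x ≠ y) : dp x.rep y.rep ≠ 0 := by
  intro hdp
  exact h (by
    rw [← Projectivization.mk_rep x, ← Projectivization.mk_rep y]
    exact mk_eq_of_dp_zero x.rep_nonzero y.rep_nonzero hdp)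

lemma exists_gl_two (u₁ u₂ v₁ v₂ : CP1) (hu : u₁ ≠ u₂) (hv : v₁ ≠ v₂) :
    ∃ γ : Matrix.GeneralLinearGroup (Fin 2) ℂ, ∃ c : ℂ, c ≠ 0 ∧
      (γ : Matrix (Fin 2) (Fin 2) ℂ).mulVec u₁.rep = c • v₁.rep ∧
      (γ : Matrix (Fin 2) (Fin 2) ℂ).mulVec u₂.rep = c • v₂.rep := by
  set a1 := u₁.rep with ha1
  set a2 := u₂.rep with ha2
  set b1 := v₁.rep with hb1
  set b2 := v₂.rep with hb2
  have hda : dp a1 a2 ≠ 0 := dp_rep_ne_zero hu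
  have hdb : dp b1 b2 ≠ 0 := dp_rep_ne_zero hv
  set B : Matrix (Fin 2) (Fin 2) ℂ := !![b1 0, b2 0; b1 1, b2 1] with hB
  set Aadj : Matrix (Fin 2) (Fin 2) ℂ := !![a2 1, -(a2 0); -(a1 1), a1 0] with hAadj
  have hdet : (B * Aadj).det ≠ 0 := by
    rw [Matrix.det_mul]
    have h1 : B.det = dp b1 b2 := by
      rw [hB, Matrix.det_fin_two_of, dp]; ring
    have h2 : Aadj.det = dp a1 a2 := by
      rw [hAadj, Matrix.det_fin_two_of, dp]; ring
    rw [h1, h2]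
    exact mul_ne_zero hdb hda
  refine ⟨Matrix.GeneralLinearGroup.mkOfDetNeZero (B * Aadj) hdet, dp a1 a2, hda, ?_, ?_⟩ <;>
  · show (B * Aadj).mulVec _ = _
    funext i
    fin_cases i <;>
      simp [hB, hAadj, Matrix.mulVec, dotProduct, Fin.sum_univ_two, Matrix.mul_apply, dp,
        Pi.smul_apply, smul_eq_mul] <;> ring

end Aux

/-- The Möbius action of `GL(2, ℂ)` on the Riemann sphere `ℂP¹` is weak mixing but not
thick strong mixing. -/
theorem gl2_cp1_weakMixing_not_thickStrongMixing :
    (∀ U₁ U₂ V₁ V₂ : Set CP1,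
      IsOpen U₁ → U₁.Nonempty → IsOpen U₂ → U₂.Nonempty →
      IsOpen V₁ → V₁.Nonempty → IsOpen V₂ → V₂.Nonempty →
      ∃ γ : Matrix.GeneralLinearGroup (Fin 2) ℂ, glHits γ U₁ V₁ ∧ glHits γ U₂ V₂) ∧
    ¬ ∃ N : Set (Matrix.GeneralLinearGroup (Fin 2) ℂ), IsThick N ∧
        ∀ U V : Set CP1, IsOpen U → U.Nonempty → IsOpen V → V.Nonempty →
          ∃ F : Set (Matrix.GeneralLinearGroup (Fin 2) ℂ), IsCompact F ∧ F ⊆ N ∧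
            ∀ γ ∈ N \ F, glHits γ U V := by
  constructor
  · -- Weak mixing
    intro U₁ U₂ V₁ V₂ hU₁ hU₁n hU₂ hU₂n hV₁ hV₁n hV₂ hV₂n
    obtain ⟨u₁, hu₁⟩ := hU₁n
    obtain ⟨u₂, hu₂, hu₂ne⟩ := exists_mem_ne hU₂ hU₂n u₁
    obtain ⟨v₁, hv₁⟩ := hV₁n
    obtain ⟨v₂, hv₂, hv₂ne⟩ := exists_mem_ne hV₂ hV₂n v₁
    obtain ⟨γ, c, hc, hγ1, hγ2⟩ := exists_gl_two u₁ u₂ v₁ v₂ hu₂ne.symm hv₂ne.symm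
    refine ⟨γ, ?_, ?_⟩
    · refine ⟨u₁.rep, c • v₁.rep, u₁.rep_nonzero,
        smul_ne_zero hc v₁.rep_nonzero, hγ1.symm, ?_, ?_⟩
      · rw [Projectivization.mk_rep]; exact hu₁
      · have : Projectivization.mk ℂ (c • v₁.rep) (smul_ne_zero hc v₁.rep_nonzero)
            = Projectivization.mk ℂ v₁.rep v₁.rep_nonzero :=
          (Projectivization.mk_eq_mk_iff' ℂ _ _ _ _).2 ⟨c, rfl⟩
        rw [this, Projectivization.mk_rep]; exact hv₁
    · refine ⟨u₂.rep, c • v₂.rep, u₂.rep_nonzero,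
        smul_ne_zero hc v₂.rep_nonzero, hγ2.symm, ?_, ?_⟩
      · rw [Projectivization.mk_rep]; exact hu₂
      · have : Projectivization.mk ℂ (c • v₂.rep) (smul_ne_zero hc v₂.rep_nonzero)
            = Projectivization.mk ℂ v₂.rep v₂.rep_nonzero :=
          (Projectivization.mk_eq_mk_iff' ℂ _ _ _ _).2 ⟨c, rfl⟩
        rw [this, Projectivization.mk_rep]; exact hv₂
  · -- Not thick strong mixing
    rintro ⟨N, hthick, hmix⟩
    -- the four pairs of test sets
    set S1 : Set CP1 := projSet 0 1 1 0 (1/100) with hS1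
    set S2 : Set CP1 := projSet 1 0 0 1 (1/100) with hS2
    set S3 : Set CP1 := projSet (-1) 1 1 0 (1/100) with hS3
    set S4 : Set CP1 := projSet (-1) 2 1 0 (1/100) with hS4
    set S4' : Set CP1 := projSet (-2) 1 1 0 (1/100) with hS4'
    have hS1ne : S1.Nonempty :=
      ⟨chart0 0, by rw [hS1, chart0, mem_projSet_mk]; norm_num⟩
    have hS2ne : S2.Nonempty :=
      ⟨chart1 0, by rw [hS2, chart1, mem_projSet_mk]; norm_num⟩
    have hS3ne : S3.Nonempty :=
      ⟨chart0 1, by rw [hS3, chart0, mem_projSet_mk]; norm_num⟩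
    have hS4ne : S4.Nonempty :=
      ⟨chart0 (1/2), by rw [hS4, chart0, mem_projSet_mk]; norm_num⟩
    have hS4'ne : S4'.Nonempty :=
      ⟨chart0 2, by rw [hS4', chart0, mem_projSet_mk]; norm_num⟩
    obtain ⟨F1, hF1c, -, hF1⟩ :=
      hmix S1 S1 (isOpen_projSet _ _ _ _ _) hS1ne (isOpen_projSet _ _ _ _ _) hS1ne
    obtain ⟨F2, hF2c, -, hF2⟩ :=
      hmix S2 S2 (isOpen_projSet _ _ _ _ _) hS2ne (isOpen_projSet _ _ _ _ _) hS2ne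
    obtain ⟨F3, hF3c, -, hF3⟩ :=
      hmix S3 S3 (isOpen_projSet _ _ _ _ _) hS3ne (isOpen_projSet _ _ _ _ _) hS3ne
    obtain ⟨F4, hF4c, -, hF4⟩ :=
      hmix S4 S4' (isOpen_projSet _ _ _ _ _) hS4ne (isOpen_projSet _ _ _ _ _) hS4'ne
    set F := F1 ∪ F2 ∪ F3 ∪ F4 with hF
    have hFc : IsCompact F := ((hF1c.union hF2c).union hF3c).union hF4c
    -- the function |det|
    set φ : Matrix.GeneralLinearGroup (Fin 2) ℂ → ℝ :=
      fun γ => Complex.abs ((γ : Matrix (Fin 2) (Fin 2) ℂ).det) with hφ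
    have hφcont : Continuous φ :=
      Complex.continuous_abs.comp (Units.continuous_val.matrix_det)
    have hφpos : ∀ γ, 0 < φ γ := by
      intro γ
      have : ((γ : Matrix (Fin 2) (Fin 2) ℂ)).det ≠ 0 :=
        ((Matrix.isUnit_iff_isUnit_det _).mp γ.isUnit).ne_zero
      exact AbsoluteValue.pos Complex.abs this
    -- find an element of N outside F
    have key : ∃ γ₀ ∈ N, γ₀ ∉ F := by
      rcases Set.eq_empty_or_nonempty F with hFe | hFne
      · obtain ⟨x, hxN, -⟩ := hthick ∅
        exact ⟨x, hxN, by rw [hFe]; exact Set.notMem_empty x⟩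
      · obtain ⟨γC, hγCF, hC⟩ := hFc.exists_isMaxOn hFne hφcont.continuousOn
        obtain ⟨γc, hγcF, hc⟩ := hFc.exists_isMinOn hFne hφcont.continuousOn
        rw [isMaxOn_iff] at hC
        rw [isMinOn_iff] at hc
        have hcpos := hφpos γc
        have hCpos := hφpos γC
        obtain ⟨r, hrpos, hrC⟩ : ∃ r : ℝ, 1 ≤ r ∧ φ γC < r * φ γc := by
          refine ⟨φ γC / φ γc + 1, ?_, ?_⟩
          · have h0 : 0 ≤ φ γC / φ γc := div_nonneg hCpos.le hcpos.le
            linarith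
          · rw [add_mul, one_mul, div_mul_cancel₀ _ hcpos.ne']
            linarith
        have hrne : ((r : ℂ)) ≠ 0 := by
          simp only [ne_eq, Complex.ofReal_eq_zero]
          linarith
        set lam : Matrix.GeneralLinearGroup (Fin 2) ℂ :=
          Matrix.GeneralLinearGroup.mkOfDetNeZero ((r : ℂ) • (1 : Matrix (Fin 2) (Fin 2) ℂ))
            (by
              rw [Matrix.det_smul, Matrix.det_one]
              simpa using pow_ne_zero 2 hrne) with hlam
        obtain ⟨x, hxN, hxIn⟩ := hthick {lam}
        simp only [Finset.mem_singleton, Set.iInter_iInter_eq_left] at hxIn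
        obtain ⟨n, hnN, hnx⟩ := hxIn
        have hsmul : x = lam * n := by rw [← hnx]; rfl
        -- φ x = r^2 * φ n
        have hdetlam : ((lam : Matrix (Fin 2) (Fin 2) ℂ)).det = ((r:ℂ))^2 := by
          show (((r : ℂ) • (1 : Matrix (Fin 2) (Fin 2) ℂ))).det = _
          rw [Matrix.det_smul, Matrix.det_one]
          simp
        have hφx : φ x = r^2 * φ n := by
          rw [hsmul, hφ]
          show Complex.abs ((↑(lam * n) : Matrix (Fin 2) (Fin 2) ℂ)).det = _
          rw [Units.val_mul, Matrix.det_mul, map_mul, hdetlam]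
          congr 1
          rw [map_pow]
          simp [Complex.abs_ofReal, abs_of_pos (by linarith : (0:ℝ) < r)]
        by_cases hxF : x ∈ F
        · by_cases hnF : n ∈ F
          · exfalso
            have h1 : φ x ≤ φ γC := hC x hxF
            have h2 : φ γc ≤ φ n := hc n hnF
            have hnpos := hφpos n
            have hrr : r * φ γc ≤ r * φ n := by
              apply mul_le_mul_of_nonneg_left h2; linarith
            have hr2 : r * φ n ≤ r^2 * φ n := by
              have : r ≤ r^2 := by nlinarith
              apply mul_le_mul_of_nonneg_right this; linarith
            linarith
          · exact ⟨n, hnN, hnF⟩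
        · exact ⟨x, hxN, hxF⟩
    obtain ⟨γ₀, hγ₀N, hγ₀F⟩ := key
    have hmem : ∀ (G : Set (Matrix.GeneralLinearGroup (Fin 2) ℂ)), G ⊆ F → γ₀ ∈ N \ G :=
      fun G hG => ⟨hγ₀N, fun h => hγ₀F (hG h)⟩
    have hg1 := hF1 γ₀ (hmem F1 (by intro z hz; exact Or.inl (Or.inl (Or.inl hz))))
    have hg2 := hF2 γ₀ (hmem F2 (by intro z hz; exact Or.inl (Or.inl (Or.inr hz))))
    have hg3 := hF3 γ₀ (hmem F3 (by intro z hz; exact Or.inl (Or.inr hz)))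
    have hg4 := hF4 γ₀ (hmem F4 (by intro z hz; exact Or.inr hz))
    -- extract vectors
    obtain ⟨x1, y1, hx1, hy1, hxy1, hx1U, hy1V⟩ := hg1
    obtain ⟨x2, y2, hx2, hy2, hxy2, hx2U, hy2V⟩ := hg2
    obtain ⟨x3, y3, hx3, hy3, hxy3, hx3U, hy3V⟩ := hg3
    obtain ⟨x4, y4, hx4, hy4, hxy4, hx4U, hy4V⟩ := hg4
    -- convert memberships to coordinate estimates
    rw [hS1, mem_projSet_mk] at hx1U hy1V
    rw [hS2, mem_projSet_mk] at hx2U hy2V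
    rw [hS3, mem_projSet_mk] at hx3U hy3V
    rw [hS4, mem_projSet_mk] at hx4U
    rw [hS4', mem_projSet_mk] at hy4V
    have c1x : Complex.abs (x1 1) < (1/100) * Complex.abs (x1 0) := by
      rw [show (0:ℂ) * x1 0 + 1 * x1 1 = x1 1 from by ring,
        show (1:ℂ) * x1 0 + 0 * x1 1 = x1 0 from by ring] at hx1U
      exact hx1U
    have c1y : Complex.abs (y1 1) < (1/100) * Complex.abs (y1 0) := by
      rw [show (0:ℂ) * y1 0 + 1 * y1 1 = y1 1 from by ring,
        show (1:ℂ) * y1 0 + 0 * y1 1 = y1 0 from by ring] at hy1V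
      exact hy1V
    have c2x : Complex.abs (x2 0) < (1/100) * Complex.abs (x2 1) := by
      rw [show (1:ℂ) * x2 0 + 0 * x2 1 = x2 0 from by ring,
        show (0:ℂ) * x2 0 + 1 * x2 1 = x2 1 from by ring] at hx2U
      exact hx2U
    have c2y : Complex.abs (y2 0) < (1/100) * Complex.abs (y2 1) := by
      rw [show (1:ℂ) * y2 0 + 0 * y2 1 = y2 0 from by ring,
        show (0:ℂ) * y2 0 + 1 * y2 1 = y2 1 from by ring] at hy2V
      exact hy2V
    have c3x : Complex.abs (x3 1 - x3 0) < (1/100) * Complex.abs (x3 0) := by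
      rw [show (-1:ℂ) * x3 0 + 1 * x3 1 = x3 1 - x3 0 from by ring,
        show (1:ℂ) * x3 0 + 0 * x3 1 = x3 0 from by ring] at hx3U
      exact hx3U
    have c3y : Complex.abs (y3 1 - y3 0) < (1/100) * Complex.abs (y3 0) := by
      rw [show (-1:ℂ) * y3 0 + 1 * y3 1 = y3 1 - y3 0 from by ring,
        show (1:ℂ) * y3 0 + 0 * y3 1 = y3 0 from by ring] at hy3V
      exact hy3V
    have c4x : Complex.abs (2 * x4 1 - x4 0) < (1/100) * Complex.abs (x4 0) := by
      rw [show (-1:ℂ) * x4 0 + 2 * x4 1 = 2 * x4 1 - x4 0 from by ring,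
        show (1:ℂ) * x4 0 + 0 * x4 1 = x4 0 from by ring] at hx4U
      exact hx4U
    have c4y : Complex.abs (y4 1 - 2 * y4 0) < (1/100) * Complex.abs (y4 0) := by
      rw [show (-2:ℂ) * y4 0 + 1 * y4 1 = y4 1 - 2 * y4 0 from by ring,
        show (1:ℂ) * y4 0 + 0 * y4 1 = y4 0 from by ring] at hy4V
      exact hy4V
    -- the two cross-ratio inequalities
    have hU := cross_U c1x c2x c3x c4x
    have hV := cross_V c1y c2y c3y c4y
    -- transfer hV to the x's using the determinant identity
    set M : Matrix (Fin 2) (Fin 2) ℂ := (γ₀ : Matrix (Fin 2) (Fin 2) ℂ) with hM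
    set D : ℝ := Complex.abs M.det with hD
    have hDpos : 0 < D := hφpos γ₀
    have trans : ∀ (v w : Fin 2 → ℂ),
        Complex.abs (dp (M.mulVec v) (M.mulVec w)) = D * Complex.abs (dp v w) := by
      intro v w
      rw [dp_mulVec, map_mul]
    rw [hxy1, hxy2, hxy3, hxy4] at hV
    rw [trans, trans, trans, trans] at hV
    -- hV : (D * |dp x1 x3|) * (D * |dp x2 x4|) < (D * |dp x1 x4|) * (D * |dp x2 x3|)
    have hD2 : 0 < D * D := mul_pos hDpos hDpos
    nlinarith [hU, hV, hD2, Complex.abs.nonneg (dp x1 x3), Complex.abs.nonneg (dp x2 x4),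
      Complex.abs.nonneg (dp x1 x4), Complex.abs.nonneg (dp x2 x3)]
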